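/- arXiv:1107.4775 — 3 statements merged into one kernel-verified Lean document; each statement's English description precedes it below -/
import Mathlib

section
/- Let d ≥ 1 and 1 ≤ k ≤ d. If n·r_n^d → 0 and n^{k+1} r_n^{dk} → 0 as n → ∞, then N_{k,n} converges to 0 in L², i.e., lim_{n→∞} E[N_{k,n}²] = 0. -/
open MeasureTheory ProbabilityTheory Filter Finset Metric
open scoped ENNReal NNReal Topology Classical

noncomputable section

/-- The circumcenter of a `(k+1)`-tuple of points in `ℝ^d` (the unique point of the affine
span equidistant from all points), or `0` if the points are affinely dependent. -/
def circC {d k : ℕ} (y : Fin (k + 1) → EuclideanSpace ℝ (Fin d)) :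
    EuclideanSpace ℝ (Fin d) :=
  if h : AffineIndependent ℝ y then
    (⟨y, h⟩ : Affine.Simplex ℝ (EuclideanSpace ℝ (Fin d)) k).circumcenter
  else 0

/-- The circumradius of a `(k+1)`-tuple, or `0` if the points are affinely dependent. -/
def circR {d k : ℕ} (y : Fin (k + 1) → EuclideanSpace ℝ (Fin d)) : ℝ :=
  if h : AffineIndependent ℝ y then
    (⟨y, h⟩ : Affine.Simplex ℝ (EuclideanSpace ℝ (Fin d)) k).circumradius
  else 0

/-- The condition `h(Y) = 1`: the points are affinely independent (in general position) and
the circumcenter lies in the relative interior of their convex hull. -/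
def hCond {d k : ℕ} (y : Fin (k + 1) → EuclideanSpace ℝ (Fin d)) : Prop :=
  AffineIndependent ℝ y ∧
    circC y ∈ intrinsicInterior ℝ (convexHull ℝ (Set.range y))

/-- The condition `h_ε(Y) = 1`: `h(Y) = 1` together with `R(Y) ≤ ε`. -/
def hEpsCond {d k : ℕ} (ε : ℝ) (y : Fin (k + 1) → EuclideanSpace ℝ (Fin d)) : Prop :=
  hCond y ∧ circR y ≤ ε

/-- The condition `g_ε(Y, P) = 1`: `h_ε(Y) = 1` and the open ball `B(Y)` contains no
point of `P`. -/
def gEpsCond {d k : ℕ} (ε : ℝ) (y : Fin (k + 1) → EuclideanSpace ℝ (Fin d))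
    (P : Set (EuclideanSpace ℝ (Fin d))) : Prop :=
  hEpsCond ε y ∧ P ∩ Metric.ball (circC y) (circR y) = ∅

/-- The `(k+1)`-tuple of points associated to a `(k+1)`-element subset `s` of indices
(listed in increasing order); junk value if `s.card ≠ k + 1`. -/
def tupleOf {d : ℕ} {n : ℕ} (X : Fin n → EuclideanSpace ℝ (Fin d)) (k : ℕ)
    (s : Finset (Fin n)) : Fin (k + 1) → EuclideanSpace ℝ (Fin d) :=
  if hs : s.card = k + 1 then fun i => X ((s.orderIsoOfFin hs i : Fin n)) else fun _ => 0

/-- `N_{k,n}`: the number of index-`k` critical points of the distance function of the point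
set `{X 0, …, X (n-1)}` lying at distance at most `r` from the point set. -/
def critCount (d k n : ℕ) (r : ℝ) (X : Fin n → EuclideanSpace ℝ (Fin d)) : ℕ :=
  ((Finset.powersetCard (k + 1) (Finset.univ : Finset (Fin n))).filter fun s =>
    gEpsCond r (tupleOf X k s) (Set.range X)).card

/-- `ω_d`, the Lebesgue volume of the unit ball in `ℝ^d`. -/
def unitBallVol (d : ℕ) : ℝ :=
  (volume (Metric.ball (0 : EuclideanSpace ℝ (Fin d)) 1)).toReal

/-- The constant `μ_k`. -/
def muK (d k : ℕ) (f : EuclideanSpace ℝ (Fin d) → ℝ) : ℝ :=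
  ((Nat.factorial (k + 1) : ℝ))⁻¹ * (∫ x, f x ^ (k + 1)) *
    ∫ y : Fin k → EuclideanSpace ℝ (Fin d),
      (if hEpsCond 1 (Fin.cons 0 y) then (1 : ℝ) else 0)


lemma aux_pi_star {E : Type*} [MeasurableSpace E] [PseudoMetricSpace E] [OpensMeasurableSpace E]
    [SecondCountableTopology E]
    {ι : Type*} [Fintype ι] (μ : Measure E) [IsProbabilityMeasure μ]
    (Z : Finset ι) (a : ι → ι) (ha : ∀ i, a i ∈ Z) (ρ : ℝ) (c : ℝ≥0∞)
    (hc : ∀ x : E, μ (Metric.closedBall x ρ) ≤ c) :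
    (Measure.pi fun _ : ι => μ) {x | ∀ i, i ∉ Z → dist (x i) (x (a i)) ≤ ρ}
      ≤ c ^ (Fintype.card ι - Z.card) := by
  classical
  set p : ι → Prop := fun i => i ∈ Z with hp
  set e := MeasurableEquiv.piEquivPiSubtypeProd (fun _ : ι => E) p with he
  have hmp := measurePreserving_piEquivPiSubtypeProd (α := fun _ : ι => E) (μ := fun _ : ι => μ) p
  set T : Set ((∀ i : Subtype p, E) × (∀ i : {i // ¬ p i}, E)) :=
    {q | ∀ i : {i // ¬ p i}, dist (q.2 i) (q.1 ⟨a i, ha i⟩) ≤ ρ} with hTdef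
  have hT : MeasurableSet T := by
    have : T = ⋂ i : {i // ¬ p i}, {q : (∀ i : Subtype p, E) × (∀ i : {i // ¬ p i}, E) |
        dist (q.2 i) (q.1 ⟨a i, ha i⟩) ≤ ρ} := by
      ext q; simp [hTdef]
    rw [this]
    refine MeasurableSet.iInter fun i => ?_
    exact measurableSet_le (Measurable.dist (measurable_snd.eval) (measurable_fst.eval))
      measurable_const
  have hS : {x : ∀ _ : ι, E | ∀ i, i ∉ Z → dist (x i) (x (a i)) ≤ ρ} = ⇑e ⁻¹' T := by
    ext x
    constructor
    · intro hx i
      exact hx i i.2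
    · intro hx i hi
      exact hx ⟨i, hi⟩
  rw [hS, hmp.measure_preimage hT.nullMeasurableSet]
  rw [Measure.prod_apply hT]
  have hfiber : ∀ y : ∀ i : Subtype p, E,
      (Measure.pi fun _ : {i // ¬ p i} => μ) (Prod.mk y ⁻¹' T)
        ≤ c ^ (Fintype.card ι - Z.card) := by
    intro y
    have : Prod.mk y ⁻¹' T = Set.pi Set.univ
        (fun i : {i // ¬ p i} => Metric.closedBall (y ⟨a i, ha i⟩) ρ) := by
      ext w; simp [hTdef, Set.mem_pi, Metric.mem_closedBall]
    rw [this, Measure.pi_pi]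
    calc ∏ i : {i // ¬ p i}, μ (Metric.closedBall (y ⟨a i, ha i⟩) ρ)
        ≤ ∏ _i : {i // ¬ p i}, c := Finset.prod_le_prod' fun i _ => hc _
      _ = c ^ Fintype.card {i // ¬ p i} := by
          rw [Finset.prod_const, Finset.card_univ]
      _ = c ^ (Fintype.card ι - Z.card) := by
          congr 1
          rw [Fintype.card_subtype_compl]
          congr 1
          exact Fintype.card_coe Z
  refine (lintegral_mono hfiber).trans ?_
  rw [lintegral_const, measure_univ, mul_one]

lemma aux_map_pi {d : ℕ} {Ω : Type*} [MeasureSpace Ω] [IsProbabilityMeasure (ℙ : Measure Ω)]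
    (μ : Measure (EuclideanSpace ℝ (Fin d))) [IsProbabilityMeasure μ]
    (X : ℕ → Ω → EuclideanSpace ℝ (Fin d))
    (hX_meas : ∀ i, Measurable (X i))
    (hX_indep : iIndepFun X ℙ)
    (hX_law : ∀ i, Measure.map (X i) ℙ = μ)
    (T : Finset ℕ) :
    Measure.map (fun ω (i : {x // x ∈ T}) => X i.val ω) ℙ = Measure.pi fun _ => μ := by
  classical
  have hΦ : Measurable (fun ω (i : {x // x ∈ T}) => X i.val ω) :=
    measurable_pi_lambda _ fun i => hX_meas i.val
  refine (Measure.pi_eq fun s hs => ?_).symm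
  rw [Measure.map_apply hΦ (MeasurableSet.univ_pi hs)]
  set sets : ℕ → Set (EuclideanSpace ℝ (Fin d)) :=
    fun i => if h : i ∈ T then s ⟨i, h⟩ else Set.univ with hsets
  have hsetsm : ∀ i, i ∈ T → MeasurableSet (sets i) := by
    intro i hi
    simp only [hsets, dif_pos hi]
    exact hs _
  have hpre : (fun ω (i : {x // x ∈ T}) => X i.val ω) ⁻¹' Set.pi Set.univ s
      = ⋂ i ∈ T, X i ⁻¹' sets i := by
    ext ω
    simp only [Set.mem_preimage, Set.mem_pi, Set.mem_univ, forall_true_left, Set.mem_iInter]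
    constructor
    · intro h i hi
      simpa only [hsets, dif_pos hi] using h ⟨i, hi⟩
    · intro h i
      simpa only [hsets, dif_pos i.2] using h i.val i.2
  rw [hpre, hX_indep.measure_inter_preimage_eq_mul T hsetsm]
  have : ∀ i ∈ T, ℙ (X i ⁻¹' sets i) = μ (sets i) := by
    intro i hi
    rw [← hX_law i, Measure.map_apply (hX_meas i) (hsetsm i hi)]
  rw [Finset.prod_congr rfl this, ← Finset.prod_coe_sort]
  exact Finset.prod_congr rfl fun i _ => by simp only [hsets, dif_pos i.2]
lemma aux_prob_star {d : ℕ} {Ω : Type*} [MeasureSpace Ω] [IsProbabilityMeasure (ℙ : Measure Ω)]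
    (μ : Measure (EuclideanSpace ℝ (Fin d))) [IsProbabilityMeasure μ]
    (X : ℕ → Ω → EuclideanSpace ℝ (Fin d))
    (hX_meas : ∀ i, Measurable (X i))
    (hX_indep : iIndepFun X ℙ)
    (hX_law : ∀ i, Measure.map (X i) ℙ = μ)
    (T Z : Finset ℕ) (hZT : Z ⊆ T) (a : ℕ → ℕ) (ha : ∀ i, a i ∈ Z)
    (ρ : ℝ) (c : ℝ≥0∞) (hc : ∀ x, μ (Metric.closedBall x ρ) ≤ c) :
    ℙ {ω | ∀ i ∈ T, i ∉ Z → dist (X i ω) (X (a i) ω) ≤ ρ} ≤ c ^ (T.card - Z.card) := by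
  classical
  set Z' : Finset {x // x ∈ T} := Finset.univ.filter (fun i : {x // x ∈ T} => i.val ∈ Z)
    with hZ'
  set a' : {x // x ∈ T} → {x // x ∈ T} := fun i => ⟨a i.val, hZT (ha i.val)⟩ with ha'
  have ha'Z : ∀ i, a' i ∈ Z' := fun i => by simp [hZ', ha', ha i.val]
  set S : Set ({x // x ∈ T} → EuclideanSpace ℝ (Fin d)) :=
    {x | ∀ i, i ∉ Z' → dist (x i) (x (a' i)) ≤ ρ} with hSdef
  have hSm : MeasurableSet S := by
    have hrw : S = ⋂ i : {x // x ∈ T}, {x : {x // x ∈ T} → EuclideanSpace ℝ (Fin d) |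
        i ∉ Z' → dist (x i) (x (a' i)) ≤ ρ} := by ext x; simp [hSdef]
    rw [hrw]
    refine MeasurableSet.iInter fun i => ?_
    by_cases h : i ∈ Z'
    · simp [h]
    · have : {x : {x // x ∈ T} → EuclideanSpace ℝ (Fin d) |
          i ∉ Z' → dist (x i) (x (a' i)) ≤ ρ}
          = {x | dist (x i) (x (a' i)) ≤ ρ} := by ext x; simp [h]
      rw [this]
      exact measurableSet_le ((measurable_pi_apply i).dist (measurable_pi_apply _))
        measurable_const
  have hΦ : Measurable (fun ω (i : {x // x ∈ T}) => X i.val ω) :=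
    measurable_pi_lambda _ fun i => hX_meas i.val
  have hpre : {ω | ∀ i ∈ T, i ∉ Z → dist (X i ω) (X (a i) ω) ≤ ρ}
      = (fun ω (i : {x // x ∈ T}) => X i.val ω) ⁻¹' S := by
    ext ω
    simp only [Set.mem_setOf_eq, Set.mem_preimage, hSdef, hZ', ha', Finset.mem_filter,
      Finset.mem_univ, true_and]
    exact ⟨fun h i hi => h i.val i.2 hi, fun h i hi hiZ => h ⟨i, hi⟩ hiZ⟩
  rw [hpre, ← Measure.map_apply hΦ hSm,
    aux_map_pi μ X hX_meas hX_indep hX_law T]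
  have hcard : Z'.card = Z.card :=
    Finset.card_bij (fun i _ => i.val) (fun i hi => by simpa [hZ'] using hi)
      (fun i hi j hj h => Subtype.ext h)
      (fun b hb => ⟨⟨b, hZT hb⟩, by simp [hZ', hb], rfl⟩)
  have := aux_pi_star (ι := {x // x ∈ T}) μ Z' a' ha'Z ρ c hc
  rwa [Fintype.card_coe, hcard] at this

lemma aux_choose_le_two_pow (m j : ℕ) : m.choose j ≤ 2 ^ m := by
  by_cases h : j ≤ m
  · calc m.choose j ≤ ∑ i ∈ Finset.range (m + 1), m.choose i :=
        Finset.single_le_sum (fun i _ => Nat.zero_le _) (Finset.mem_range.mpr (by omega))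
      _ = 2 ^ m := Nat.sum_range_choose m
  · rw [Nat.choose_eq_zero_of_lt (by omega)]; exact Nat.zero_le _

lemma aux_fiber_card {α : Type*} [Fintype α] [DecidableEq α] (k j : ℕ)
    (P : Finset (Finset α)) (hP : ∀ s ∈ P, s.card = k + 1) :
    ((P ×ˢ P).filter fun q : Finset α × Finset α => (q.1 ∩ q.2).card = j).card
      ≤ P.card * (2 ^ (k + 1) * (Fintype.card α).choose (k + 1 - j)) := by
  classical
  rw [Finset.card_eq_sum_card_fiberwise
    (f := Prod.fst) (t := P)
    (fun q hq => (Finset.mem_product.mp (Finset.mem_filter.mp hq).1).1)]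
  have hinner : ∀ s ∈ P,
      ((((P ×ˢ P).filter fun q : Finset α × Finset α => (q.1 ∩ q.2).card = j).filter
        fun q => q.1 = s).card) ≤ 2 ^ (k + 1) * (Fintype.card α).choose (k + 1 - j) := by
    intro s hsP
    have hsc : s.card = k + 1 := hP s hsP
    have hle := Finset.card_le_card_of_injOn
      (f := fun q : Finset α × Finset α => (q.2 ∩ s, q.2 \ s))
      (s := (((P ×ˢ P).filter fun q : Finset α × Finset α => (q.1 ∩ q.2).card = j).filter
        fun q => q.1 = s))
      (t := (s.powersetCard j) ×ˢ (Finset.univ.powersetCard (k + 1 - j)))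
      ?_ ?_
    · refine hle.trans ?_
      rw [Finset.card_product, Finset.card_powersetCard, Finset.card_powersetCard, hsc,
        Finset.card_univ]
      exact Nat.mul_le_mul_right _ (aux_choose_le_two_pow _ _)
    · intro q hq
      rw [Finset.mem_coe] at hq ⊢
      simp only [Finset.mem_filter] at hq
      obtain ⟨⟨hqPP, hqj⟩, hq1⟩ := hq
      obtain ⟨hq1P, hq2P⟩ := Finset.mem_product.mp hqPP
      have hq2c : q.2.card = k + 1 := hP _ hq2P
      rw [Finset.mem_product]
      dsimp only
      constructor
      · rw [Finset.mem_powersetCard]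
        refine ⟨Finset.inter_subset_right, ?_⟩
        rw [Finset.inter_comm, ← hq1]
        exact hqj
      · rw [Finset.mem_powersetCard]
        refine ⟨Finset.subset_univ _, ?_⟩
        have h1 := Finset.card_sdiff_add_card_inter q.2 s
        have h2 : (q.2 ∩ s).card = j := by rw [Finset.inter_comm, ← hq1]; exact hqj
        omega
    · intro q hq q' hq' heq
      have hq1 := (Finset.mem_filter.mp hq).2
      have hq'1 := (Finset.mem_filter.mp hq').2
      have ha : q.2 ∩ s = q'.2 ∩ s := congrArg Prod.fst heq
      have hbb : q.2 \ s = q'.2 \ s := congrArg Prod.snd heq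
      have h2 : q.2 = q'.2 := by
        rw [← Finset.sdiff_union_inter q.2 s, ← Finset.sdiff_union_inter q'.2 s, ha, hbb]
      exact Prod.ext (hq1.trans hq'1.symm) h2
  calc ∑ s ∈ P, ((((P ×ˢ P).filter fun q : Finset α × Finset α => (q.1 ∩ q.2).card = j).filter
        fun q => Prod.fst q = s).card)
      ≤ ∑ _s ∈ P, 2 ^ (k + 1) * (Fintype.card α).choose (k + 1 - j) :=
        Finset.sum_le_sum hinner
    _ = P.card * (2 ^ (k + 1) * (Fintype.card α).choose (k + 1 - j)) := by
        rw [Finset.sum_const, smul_eq_mul]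

lemma aux_mu_prob {d : ℕ} (f : EuclideanSpace ℝ (Fin d) → ℝ)
    (hf_nonneg : ∀ x, 0 ≤ f x) (hf_prob : ∫ x, f x = 1) :
    IsProbabilityMeasure (volume.withDensity fun x => ENNReal.ofReal (f x)) := by
  constructor
  have hint : Integrable f := by
    by_contra h
    rw [integral_undef h] at hf_prob
    norm_num at hf_prob
  rw [withDensity_apply _ MeasurableSet.univ, Measure.restrict_univ,
    ← ofReal_integral_eq_lintegral_ofReal hint (Filter.Eventually.of_forall hf_nonneg),
    hf_prob, ENNReal.ofReal_one]

lemma aux_mu_ball {d : ℕ} (f : EuclideanSpace ℝ (Fin d) → ℝ)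
    (M : ℝ) (hM0 : 0 ≤ M) (hfM : ∀ x, f x ≤ M) (x : EuclideanSpace ℝ (Fin d))
    {ρ : ℝ} (hρ : 0 ≤ ρ) :
    (volume.withDensity fun x => ENNReal.ofReal (f x)) (Metric.closedBall x ρ)
      ≤ ENNReal.ofReal (M *
        (volume (Metric.closedBall (0 : EuclideanSpace ℝ (Fin d)) 1)).toReal * ρ ^ d) := by
  rw [withDensity_apply _ measurableSet_closedBall]
  calc ∫⁻ y in Metric.closedBall x ρ, ENNReal.ofReal (f y)
      ≤ ∫⁻ _y in Metric.closedBall x ρ, ENNReal.ofReal M :=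
        lintegral_mono fun y => ENNReal.ofReal_le_ofReal (hfM y)
    _ = ENNReal.ofReal M * volume (Metric.closedBall x ρ) := setLIntegral_const _ _
    _ = ENNReal.ofReal M * (ENNReal.ofReal (ρ ^ d) *
          volume (Metric.closedBall (0 : EuclideanSpace ℝ (Fin d)) 1)) := by
        rw [Measure.addHaar_closedBall' volume x hρ, finrank_euclideanSpace_fin]
    _ ≤ ENNReal.ofReal (M *
          (volume (Metric.closedBall (0 : EuclideanSpace ℝ (Fin d)) 1)).toReal * ρ ^ d) := by
        rw [← ENNReal.ofReal_toReal
            (measure_closedBall_lt_top (x := (0 : EuclideanSpace ℝ (Fin d))) (r := 1)).ne,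
          ← ENNReal.ofReal_mul (by positivity : (0:ℝ) ≤ ρ ^ d),
          ← ENNReal.ofReal_mul hM0]
        exact ENNReal.ofReal_le_ofReal (le_of_eq (by rw [ENNReal.toReal_ofReal ENNReal.toReal_nonneg]; ring))

lemma aux_diam {d k n : ℕ} (r : ℝ) (Y : Fin n → EuclideanSpace ℝ (Fin d))
    (s : Finset (Fin n)) (hs : s.card = k + 1)
    (hg : gEpsCond r (tupleOf Y k s) (Set.range Y)) :
    ∀ i ∈ s, ∀ j ∈ s, dist (Y i) (Y j) ≤ 2 * r := by
  set y := tupleOf Y k s with hy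
  obtain ⟨⟨⟨hAI, _⟩, hR⟩, _⟩ := hg
  have hyd : y = fun m => Y ((s.orderIsoOfFin hs m : Fin n)) := by
    rw [hy, tupleOf, dif_pos hs]
  have hC : circC y = (⟨y, hAI⟩ : Affine.Simplex ℝ (EuclideanSpace ℝ (Fin d)) k).circumcenter :=
    dif_pos hAI
  have hRR : circR y = (⟨y, hAI⟩ : Affine.Simplex ℝ (EuclideanSpace ℝ (Fin d)) k).circumradius :=
    dif_pos hAI
  have hdist : ∀ m, dist (y m) (circC y) = circR y := by
    intro m
    rw [hC, hRR]
    exact (⟨y, hAI⟩ : Affine.Simplex ℝ (EuclideanSpace ℝ (Fin d)) k).dist_circumcenter_eq_circumradius m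
  intro i hi j hj
  have h1 : Y i = y ((s.orderIsoOfFin hs).symm ⟨i, hi⟩) := by
    rw [hyd]; simp
  have h2 : Y j = y ((s.orderIsoOfFin hs).symm ⟨j, hj⟩) := by
    rw [hyd]; simp
  calc dist (Y i) (Y j) ≤ dist (Y i) (circC y) + dist (circC y) (Y j) := dist_triangle _ _ _
    _ = circR y + circR y := by
        rw [h1, h2, dist_comm (circC y), hdist, hdist]
    _ ≤ 2 * r := by linarith

/-- Theorem 3.4, part 1: if `n r_n^d → 0` and `n^{k+1} r_n^{dk} → 0`, then `N_{k,n} → 0`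
in `L²`, i.e. `E[N_{k,n}²] → 0`. -/
theorem dist_subcritical_zero
    (d k : ℕ) (hd : 1 ≤ d) (hk1 : 1 ≤ k) (hkd : k ≤ d)
    (Ω : Type*) [MeasureSpace Ω] [IsProbabilityMeasure (ℙ : Measure Ω)]
    (f : EuclideanSpace ℝ (Fin d) → ℝ)
    (hf_meas : Measurable f) (hf_nonneg : ∀ x, 0 ≤ f x)
    (hf_bdd : ∃ M, ∀ x, f x ≤ M)
    (hf_prob : ∫ x, f x = 1)
    (X : ℕ → Ω → EuclideanSpace ℝ (Fin d))
    (hX_meas : ∀ i, Measurable (X i))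
    (hX_indep : iIndepFun X ℙ)
    (hX_law : ∀ i, Measure.map (X i) ℙ =
      volume.withDensity fun x => ENNReal.ofReal (f x))
    (r : ℕ → ℝ) (hr_pos : ∀ n, 0 < r n) (hr0 : Tendsto r atTop (𝓝 0))
    (hsub : Tendsto (fun n : ℕ => (n : ℝ) * r n ^ d) atTop (𝓝 0))
    (hzero : Tendsto (fun n : ℕ => (n : ℝ) ^ (k + 1) * r n ^ (d * k)) atTop (𝓝 0)) :
    Tendsto (fun n : ℕ => ∫ ω, (critCount d k n (r n) (fun i : Fin n => X i.val ω) : ℝ) ^ 2) atTop (𝓝 0) := by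
  classical
  obtain ⟨M, hfM⟩ := hf_bdd
  have hM0 : 0 ≤ M := le_trans (hf_nonneg 0) (hfM 0)
  set μ : Measure (EuclideanSpace ℝ (Fin d)) :=
    volume.withDensity fun x => ENNReal.ofReal (f x) with hμdef
  have hμ_prob : IsProbabilityMeasure μ := aux_mu_prob f hf_nonneg hf_prob
  set vB : ℝ := (volume (Metric.closedBall (0 : EuclideanSpace ℝ (Fin d)) 1)).toReal with hvB
  have hvB0 : 0 ≤ vB := ENNReal.toReal_nonneg
  set c0 : ℝ := M * vB * 2 ^ d with hc0
  have hc00 : 0 ≤ c0 := by positivity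
  set cR : ℕ → ℝ := fun n => c0 * r n ^ d with hcRdef
  have hcR0 : ∀ n, 0 ≤ cR n := fun n => by
    have hrn := (hr_pos n).le
    rw [hcRdef]; positivity
  have hball : ∀ n x, μ (Metric.closedBall x (2 * r n)) ≤ ENNReal.ofReal (cR n) := by
    intro n x
    have hrn := (hr_pos n).le
    refine (aux_mu_ball f M hM0 hfM x (by positivity : (0:ℝ) ≤ 2 * r n)).trans ?_
    refine ENNReal.ofReal_le_ofReal (le_of_eq ?_)
    rw [hcRdef, hc0, mul_pow]
    ring
  set F : ℕ → ℝ := fun n =>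
    (∑ i ∈ Finset.range (k + 1),
      2 ^ (k + 1) * ((n : ℝ) ^ (k + 1) * cR n ^ k) * ((n : ℝ) * cR n) ^ (k - i))
      + 2 ^ (k + 1) * ((n : ℝ) ^ (k + 1) * cR n ^ k) ^ 2 with hFdef
  have hglim : Tendsto (fun n : ℕ => (n : ℝ) ^ (k + 1) * cR n ^ k) atTop (𝓝 0) := by
    have hrw : (fun n : ℕ => (n : ℝ) ^ (k + 1) * cR n ^ k)
        = fun n : ℕ => c0 ^ k * ((n : ℝ) ^ (k + 1) * r n ^ (d * k)) := by
      funext n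
      rw [hcRdef, mul_pow, pow_mul]
      ring
    rw [hrw]
    simpa using hzero.const_mul (c0 ^ k)
  have hhlim : Tendsto (fun n : ℕ => (n : ℝ) * cR n) atTop (𝓝 0) := by
    have hrw : (fun n : ℕ => (n : ℝ) * cR n) = fun n : ℕ => c0 * ((n : ℝ) * r n ^ d) := by
      funext n
      rw [hcRdef]
      ring
    rw [hrw]
    simpa using hsub.const_mul c0
  have hFlim : Tendsto F atTop (𝓝 0) := by
    rw [hFdef]
    have h1 : Tendsto (fun n : ℕ => ∑ i ∈ Finset.range (k + 1),
        2 ^ (k + 1) * ((n : ℝ) ^ (k + 1) * cR n ^ k) * ((n : ℝ) * cR n) ^ (k - i))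
        atTop (𝓝 0) := by
      have : Tendsto (fun n : ℕ => ∑ i ∈ Finset.range (k + 1),
          2 ^ (k + 1) * ((n : ℝ) ^ (k + 1) * cR n ^ k) * ((n : ℝ) * cR n) ^ (k - i))
          atTop (𝓝 (∑ i ∈ Finset.range (k + 1), (0:ℝ))) := by
        refine tendsto_finset_sum _ fun i _ => ?_
        have := ((hglim.const_mul ((2:ℝ) ^ (k + 1))).mul (hhlim.pow (k - i)))
        simpa using this
      simpa using this
    have h2 : Tendsto (fun n : ℕ => 2 ^ (k + 1) * ((n : ℝ) ^ (k + 1) * cR n ^ k) ^ 2)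
        atTop (𝓝 0) := by
      have := (hglim.pow 2).const_mul ((2:ℝ) ^ (k + 1))
      simpa using this
    simpa using h1.add h2
  refine squeeze_zero (fun n => integral_nonneg fun ω => sq_nonneg _) ?_ hFlim
  intro n
  have hrn := (hr_pos n).le
  set P : Finset (Finset (Fin n)) :=
    Finset.powersetCard (k + 1) (Finset.univ : Finset (Fin n)) with hPdef
  have hPc : ∀ s ∈ P, s.card = k + 1 := fun s hs => (Finset.mem_powersetCard.mp hs).2
  set Es : Finset (Fin n) → Set Ω := fun s =>
    {ω | ∀ i ∈ s, ∀ j ∈ s, dist (X i.val ω) (X j.val ω) ≤ 2 * r n} with hEsdef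
  have hEsm : ∀ s, MeasurableSet (Es s) := by
    intro s
    have hrw : Es s = ⋂ (i ∈ (s : Set (Fin n))) (j ∈ (s : Set (Fin n))),
        {ω | dist (X i.val ω) (X j.val ω) ≤ 2 * r n} := by
      ext ω
      simp [hEsdef]
    rw [hrw]
    exact MeasurableSet.biInter (Set.to_countable _) fun i _ =>
      MeasurableSet.biInter (Set.to_countable _) fun j _ =>
        measurableSet_le ((hX_meas _).dist (hX_meas _)) measurable_const
  set A : Finset (Fin n) × Finset (Fin n) → Set Ω := fun q => Es q.1 ∩ Es q.2 with hAdef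
  have hAm : ∀ q, MeasurableSet (A q) := fun q => (hEsm _).inter (hEsm _)
  set Ej : ℕ → ℕ := fun j => if j = 0 then 2 * k else 2 * k + 1 - j with hEjdef
  -- pointwise bound
  have hpt : ∀ ω, ((critCount d k n (r n) fun i : Fin n => X i.val ω : ℕ) : ℝ) ^ 2
      ≤ ∑ q ∈ P ×ˢ P, (A q).indicator 1 ω := by
    intro ω
    set Y : Fin n → EuclideanSpace ℝ (Fin d) := fun i => X i.val ω with hYdef
    have h1 : ((critCount d k n (r n) Y : ℕ) : ℝ) ≤ ∑ s ∈ P, (Es s).indicator 1 ω := by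
      rw [critCount, Finset.card_filter]
      push_cast
      refine Finset.sum_le_sum fun s hsP => ?_
      by_cases hp : gEpsCond (r n) (tupleOf Y k s) (Set.range Y)
      · rw [if_pos hp]
        have hEsω : ω ∈ Es s := by
          intro i hi j hj
          exact aux_diam (r n) Y s (hPc s hsP) hp i hi j hj
        rw [Set.indicator_of_mem hEsω]
        norm_num
      · rw [if_neg hp]
        exact Set.indicator_nonneg (fun _ _ => by norm_num) _
    calc ((critCount d k n (r n) Y : ℕ) : ℝ) ^ 2
        ≤ (∑ s ∈ P, (Es s).indicator 1 ω) ^ 2 := by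
          refine pow_le_pow_left₀ (Nat.cast_nonneg _) h1 2
      _ = ∑ s ∈ P, ∑ t ∈ P, (Es s).indicator 1 ω * (Es t).indicator 1 ω := by
          rw [sq, Finset.sum_mul_sum]
      _ = ∑ q ∈ P ×ˢ P, (A q).indicator 1 ω := by
          rw [Finset.sum_product]
          refine Finset.sum_congr rfl fun s _ => Finset.sum_congr rfl fun t _ => ?_
          have := congrFun (Set.inter_indicator_one (s := Es s) (t := Es t)
            (M₀ := ℝ)) ω
          rw [hAdef]
          simpa using this.symm
  -- integral bound
  have hint : ∀ q ∈ P ×ˢ P, Integrable ((A q).indicator (1 : Ω → ℝ)) ℙ :=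
    fun q _ => (integrable_const (1 : ℝ)).indicator (hAm q)
  have h2 : ∫ ω, ((critCount d k n (r n) fun i : Fin n => X i.val ω : ℕ) : ℝ) ^ 2
      ≤ ∫ ω, ∑ q ∈ P ×ˢ P, (A q).indicator 1 ω := by
    refine integral_mono_of_nonneg (Filter.Eventually.of_forall fun ω => sq_nonneg _)
      (integrable_finset_sum _ hint) (Filter.Eventually.of_forall hpt)
  have h3 : ∫ ω, ∑ q ∈ P ×ˢ P, (A q).indicator 1 ω
      = ∑ q ∈ P ×ˢ P, (ℙ (A q)).toReal := by
    rw [integral_finset_sum _ hint]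
    exact Finset.sum_congr rfl fun q _ => integral_indicator_one (hAm q)
  -- probability bound
  have hprob : ∀ q ∈ P ×ˢ P, (ℙ (A q)).toReal ≤ cR n ^ (Ej ((q.1 ∩ q.2).card)) := by
    intro q hq
    obtain ⟨hq1, hq2⟩ := Finset.mem_product.mp hq
    have hc1 : q.1.card = k + 1 := hPc _ hq1
    have hc2 : q.2.card = k + 1 := hPc _ hq2
    have hcardle : (q.1 ∩ q.2).card ≤ k + 1 :=
      hc1 ▸ Finset.card_le_card Finset.inter_subset_left
    have hcardU := Finset.card_union_add_card_inter q.1 q.2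
    have key : ℙ (A q) ≤ ENNReal.ofReal (cR n) ^ (Ej ((q.1 ∩ q.2).card)) := by
      by_cases hne : (q.1 ∩ q.2).Nonempty
      · obtain ⟨z, hz⟩ := hne
        have hzs := (Finset.mem_inter.mp hz).1
        have hzt := (Finset.mem_inter.mp hz).2
        have hZT : ({(z : ℕ)} : Finset ℕ) ⊆ (q.1 ∪ q.2).map Fin.valEmbedding := by
          intro x hx
          rw [Finset.mem_singleton] at hx
          subst hx
          exact Finset.mem_map_of_mem _ (Finset.mem_union_left _ hzs)
        have hsub : A q ⊆ {ω | ∀ i ∈ (q.1 ∪ q.2).map Fin.valEmbedding,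
            i ∉ ({(z : ℕ)} : Finset ℕ) →
            dist (X i ω) (X ((fun _ => (z : ℕ)) i) ω) ≤ 2 * r n} := by
          rintro ω ⟨hω1, hω2⟩ i hiT _
          obtain ⟨i', hi', rfl⟩ := Finset.mem_map.mp hiT
          rcases Finset.mem_union.mp hi' with hmem | hmem
          · exact hω1 i' hmem z hzs
          · exact hω2 i' hmem z hzt
        have hle := (measure_mono hsub).trans
          (aux_prob_star μ X hX_meas hX_indep hX_law
            ((q.1 ∪ q.2).map Fin.valEmbedding) {(z : ℕ)} hZT (fun _ => (z : ℕ))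
            (fun _ => Finset.mem_singleton_self _) (2 * r n)
            (ENNReal.ofReal (cR n)) (hball n))
        refine hle.trans (le_of_eq ?_)
        congr 1
        rw [Finset.card_map, Finset.card_singleton]
        have hj0 : (q.1 ∩ q.2).card ≠ 0 := Finset.card_ne_zero_of_mem hz
        simp only [hEjdef]
        rw [if_neg hj0]
        omega
      · have hj0 : (q.1 ∩ q.2).card = 0 := by
          rw [Finset.not_nonempty_iff_eq_empty.mp hne, Finset.card_empty]
        have hs1 : q.1.Nonempty := Finset.card_pos.mp (by omega)
        have hs2 : q.2.Nonempty := Finset.card_pos.mp (by omega)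
        obtain ⟨z1, hz1⟩ := hs1
        obtain ⟨z2, hz2⟩ := hs2
        have hz12 : (z1 : ℕ) ≠ (z2 : ℕ) := by
          intro hEq
          have hz12' : z1 = z2 := Fin.val_injective hEq
          subst hz12'
          exact hne ⟨z1, Finset.mem_inter.mpr ⟨hz1, hz2⟩⟩
        set aa : ℕ → ℕ := fun i =>
          if i ∈ q.1.map Fin.valEmbedding then (z1 : ℕ) else (z2 : ℕ) with haadef
        have haa : ∀ i, aa i ∈ ({(z1 : ℕ), (z2 : ℕ)} : Finset ℕ) := by
          intro i
          simp only [haadef]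
          by_cases hh : i ∈ q.1.map Fin.valEmbedding
          · rw [if_pos hh]
            exact Finset.mem_insert_self _ _
          · rw [if_neg hh]
            exact Finset.mem_insert_of_mem (Finset.mem_singleton_self _)
        have hZT : ({(z1 : ℕ), (z2 : ℕ)} : Finset ℕ)
            ⊆ (q.1 ∪ q.2).map Fin.valEmbedding := by
          intro x hx
          rcases Finset.mem_insert.mp hx with hx1 | hx2
          · subst hx1
            exact Finset.mem_map_of_mem _ (Finset.mem_union_left _ hz1)
          · rw [Finset.mem_singleton] at hx2
            subst hx2
            exact Finset.mem_map_of_mem _ (Finset.mem_union_right _ hz2)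
        have hsub : A q ⊆ {ω | ∀ i ∈ (q.1 ∪ q.2).map Fin.valEmbedding,
            i ∉ ({(z1 : ℕ), (z2 : ℕ)} : Finset ℕ) →
            dist (X i ω) (X (aa i) ω) ≤ 2 * r n} := by
          rintro ω ⟨hω1, hω2⟩ i hiT _
          by_cases hm : i ∈ q.1.map Fin.valEmbedding
          · obtain ⟨i', hi', rfl⟩ := Finset.mem_map.mp hm
            rw [haadef]
            simp only [if_pos hm]
            exact hω1 i' hi' z1 hz1
          · obtain ⟨i', hi', rfl⟩ := Finset.mem_map.mp hiT
            have hi't : i' ∈ q.2 := by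
              rcases Finset.mem_union.mp hi' with hcon | hok
              · exact absurd (Finset.mem_map_of_mem _ hcon) hm
              · exact hok
            rw [haadef]
            simp only [if_neg hm]
            exact hω2 i' hi't z2 hz2
        have hle := (measure_mono hsub).trans
          (aux_prob_star μ X hX_meas hX_indep hX_law
            ((q.1 ∪ q.2).map Fin.valEmbedding) {(z1 : ℕ), (z2 : ℕ)} hZT aa haa
            (2 * r n) (ENNReal.ofReal (cR n)) (hball n))
        refine hle.trans (le_of_eq ?_)
        congr 1
        have hZc : ({(z1 : ℕ), (z2 : ℕ)} : Finset ℕ).card = 2 := by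
          rw [Finset.card_insert_of_notMem (by simpa using hz12), Finset.card_singleton]
        rw [Finset.card_map, hZc]
        simp [hEjdef, hj0]
        omega
    rw [← ENNReal.ofReal_pow (hcR0 n)] at key
    exact ENNReal.toReal_le_of_le_ofReal (pow_nonneg (hcR0 n) _) key
  -- counting bound
  have hcount : ∑ q ∈ P ×ˢ P, cR n ^ (Ej ((q.1 ∩ q.2).card)) ≤ F n := by
    have hmaps : ∀ q ∈ P ×ˢ P,
        (q.1 ∩ q.2).card ∈ Finset.range (k + 2) := by
      intro q hq
      obtain ⟨hq1, _⟩ := Finset.mem_product.mp hq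
      have : (q.1 ∩ q.2).card ≤ k + 1 :=
        (hPc _ hq1) ▸ Finset.card_le_card Finset.inter_subset_left
      exact Finset.mem_range.mpr (by omega)
    rw [← Finset.sum_fiberwise_of_maps_to hmaps
      (fun q : Finset (Fin n) × Finset (Fin n) => cR n ^ (Ej ((q.1 ∩ q.2).card)))]
    have hstep : ∀ j ∈ Finset.range (k + 2),
        (∑ q ∈ (P ×ˢ P).filter
            (fun q : Finset (Fin n) × Finset (Fin n) => (q.1 ∩ q.2).card = j),
          cR n ^ (Ej ((q.1 ∩ q.2).card)))
        ≤ ((n : ℝ) ^ (k + 1) * (2 ^ (k + 1) * (n : ℝ) ^ (k + 1 - j))) * cR n ^ (Ej j) := by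
      intro j _
      have hfc : (((P ×ˢ P).filter
          (fun q : Finset (Fin n) × Finset (Fin n) => (q.1 ∩ q.2).card = j)).card : ℝ)
          ≤ (n : ℝ) ^ (k + 1) * (2 ^ (k + 1) * (n : ℝ) ^ (k + 1 - j)) := by
        have hnat : ((P ×ˢ P).filter
            (fun q : Finset (Fin n) × Finset (Fin n) => (q.1 ∩ q.2).card = j)).card
            ≤ n ^ (k + 1) * (2 ^ (k + 1) * n ^ (k + 1 - j)) := by
          refine (aux_fiber_card k j P hPc).trans ?_
          have hPcard : P.card ≤ n ^ (k + 1) := by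
            rw [hPdef, Finset.card_powersetCard, Finset.card_univ, Fintype.card_fin]
            exact Nat.choose_le_pow n (k + 1)
          have hch : (Fintype.card (Fin n)).choose (k + 1 - j) ≤ n ^ (k + 1 - j) := by
            rw [Fintype.card_fin]
            exact Nat.choose_le_pow n (k + 1 - j)
          exact Nat.mul_le_mul hPcard (Nat.mul_le_mul_left _ hch)
        calc (((P ×ˢ P).filter
            (fun q : Finset (Fin n) × Finset (Fin n) => (q.1 ∩ q.2).card = j)).card : ℝ)
            ≤ ((n ^ (k + 1) * (2 ^ (k + 1) * n ^ (k + 1 - j)) : ℕ) : ℝ) :=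
              Nat.cast_le.mpr hnat
          _ = (n : ℝ) ^ (k + 1) * (2 ^ (k + 1) * (n : ℝ) ^ (k + 1 - j)) := by
              push_cast
              ring
      calc (∑ q ∈ (P ×ˢ P).filter
            (fun q : Finset (Fin n) × Finset (Fin n) => (q.1 ∩ q.2).card = j),
          cR n ^ (Ej ((q.1 ∩ q.2).card)))
          = (∑ _q ∈ (P ×ˢ P).filter
              (fun q : Finset (Fin n) × Finset (Fin n) => (q.1 ∩ q.2).card = j),
            cR n ^ (Ej j)) := by
            refine Finset.sum_congr rfl fun q hq => ?_
            rw [(Finset.mem_filter.mp hq).2]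
        _ = (((P ×ˢ P).filter
              (fun q : Finset (Fin n) × Finset (Fin n) => (q.1 ∩ q.2).card = j)).card : ℝ)
              * cR n ^ (Ej j) := by
            rw [Finset.sum_const, nsmul_eq_mul]
        _ ≤ ((n : ℝ) ^ (k + 1) * (2 ^ (k + 1) * (n : ℝ) ^ (k + 1 - j))) * cR n ^ (Ej j) :=
            mul_le_mul_of_nonneg_right hfc (pow_nonneg (hcR0 n) _)
    refine (Finset.sum_le_sum hstep).trans (le_of_eq ?_)
    rw [Finset.sum_range_succ']
    rw [hFdef]
    congr 1
    · refine Finset.sum_congr rfl fun i hi => ?_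
      have hik : i ≤ k := by
        have := Finset.mem_range.mp hi
        omega
      have e1 : k + 1 - (i + 1) = k - i := by omega
      have e2 : Ej (i + 1) = k + (k - i) := by
        rw [hEjdef]
        simp only [Nat.succ_ne_zero, if_false]
        omega
      rw [e1, e2, pow_add]
      ring
    · have e2 : Ej 0 = k + k := by
        simp [hEjdef, two_mul]
      rw [e2, Nat.sub_zero, pow_add]
      ring
  calc ∫ ω, ((critCount d k n (r n) fun i : Fin n => X i.val ω : ℕ) : ℝ) ^ 2
      ≤ ∑ q ∈ P ×ˢ P, (ℙ (A q)).toReal := by rw [← h3]; exact h2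
    _ ≤ ∑ q ∈ P ×ˢ P, cR n ^ (Ej ((q.1 ∩ q.2).card)) := Finset.sum_le_sum hprob
    _ ≤ F n := hcount
end
end

section
/- Let d ≥ 1 and 1 ≤ k ≤ d, and suppose f is lower bounded with convex support. There exists a constant D* ∈ (0,∞), depending only on f (and d, k), such that if n·r_n^d → ∞ and n·r_n^d ≥ D* log n for all large n, then lim_{n→∞} E[|N_{k,n}^{(g)} − N_{k,n}|] = 0, where N_{k,n}^{(g)} is the total number of index-k critical points of d_{X_n} in ℝ^d and N_{k,n} counts those within distance r_n of X_n. -/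
open MeasureTheory ProbabilityTheory Filter Finset Metric
open scoped ENNReal NNReal Topology Classical

noncomputable section

/-- `N_{k,n}^{(g)}`: the total number of index-`k` critical points of the distance function
of the point set `{X 0, …, X (n-1)}` in all of `ℝ^d` (no restriction on the critical value). -/
def globalCritCount (d k n : ℕ) (X : Fin n → EuclideanSpace ℝ (Fin d)) : ℕ :=
  ((Finset.powersetCard (k + 1) (Finset.univ : Finset (Fin n))).filter fun s =>
    hCond (tupleOf X k s) ∧
      Set.range X ∩ Metric.ball (circC (tupleOf X k s)) (circR (tupleOf X k s)) = ∅).card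

lemma abs_coord_le_norm' {d : ℕ} (x : EuclideanSpace ℝ (Fin d)) (i : Fin d) : |x i| ≤ ‖x‖ := by
  rw [EuclideanSpace.norm_eq]
  rw [← Real.sqrt_sq_eq_abs]
  apply Real.sqrt_le_sqrt
  have : |x i| ^ 2 = ‖x i‖ ^ 2 := by rw [Real.norm_eq_abs]
  calc (x i) ^ 2 = ‖x i‖ ^ 2 := by rw [Real.norm_eq_abs, sq_abs]
    _ ≤ ∑ j, ‖x j‖ ^ 2 :=
      Finset.single_le_sum (fun j _ => sq_nonneg ‖x j‖) (Finset.mem_univ i)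

lemma vol_ball_inter_conv {d : ℕ} {K : Set (EuclideanSpace ℝ (Fin d))} (hconv : Convex ℝ K)
    {D : ℝ} (hdiam : ∀ x ∈ K, ∀ y ∈ K, dist x y ≤ D - 1)
    {c : EuclideanSpace ℝ (Fin d)} (hc : c ∈ K) {ρ : ℝ} (hρ : 0 < ρ) (hρD : ρ ≤ D) :
    ENNReal.ofReal ((ρ / D) ^ d) * volume K ≤ volume (Metric.ball c ρ ∩ K) := by
  have hD0 : 0 < D := lt_of_lt_of_le hρ hρD
  set t := ρ / D with ht
  have ht0 : 0 < t := div_pos hρ hD0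
  have ht1 : t ≤ 1 := div_le_one_of_le₀ hρD hD0.le
  have himg : AffineMap.homothety c t '' K ⊆ Metric.ball c ρ ∩ K := by
    rintro z ⟨y, hy, rfl⟩
    have happ : AffineMap.homothety c t y = t • y + (1 - t) • c := by
      simp only [AffineMap.homothety_apply, vsub_eq_sub, vadd_eq_add, smul_sub, sub_smul, one_smul]
      abel
    constructor
    · rw [mem_ball, happ]
      have heq : t • y + (1 - t) • c - c = t • (y - c) := by
        rw [smul_sub, sub_smul, one_smul]; abel
      rw [dist_eq_norm, heq, norm_smul]
      have hn : ‖y - c‖ ≤ D - 1 := by rw [← dist_eq_norm]; exact hdiam y hy c hc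
      calc ‖t‖ * ‖y - c‖ ≤ t * (D - 1) := by
            rw [Real.norm_eq_abs, abs_of_pos ht0]
            exact mul_le_mul_of_nonneg_left hn ht0.le
        _ < t * D := by nlinarith
        _ = ρ := by rw [ht, div_mul_cancel₀ _ hD0.ne']
    · rw [happ]; exact hconv hy hc ht0.le (by linarith) (by ring)
  calc ENNReal.ofReal ((ρ / D) ^ d) * volume K
      = volume (AffineMap.homothety c t '' K) := by
        rw [Measure.addHaar_image_homothety, finrank_euclideanSpace_fin,
          abs_of_nonneg (pow_nonneg ht0.le d)]
    _ ≤ volume (Metric.ball c ρ ∩ K) := measure_mono himg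

set_option maxHeartbeats 2000000 in
/-- Proposition 3.10: if `f` is lower bounded with convex support, there is a constant
`D* > 0` (depending only on `f`, `d`, `k`) such that whenever `n r_n^d → ∞` and
`n r_n^d ≥ D* log n` for all large `n`, one has `E[|N_{k,n}^{(g)} - N_{k,n}|] → 0`. -/
theorem global_vs_local
    (d k : ℕ) (hd : 1 ≤ d) (hk1 : 1 ≤ k) (hkd : k ≤ d)
    (Ω : Type*) [MeasureSpace Ω] [IsProbabilityMeasure (ℙ : Measure Ω)]
    (f : EuclideanSpace ℝ (Fin d) → ℝ)
    (hf_meas : Measurable f) (hf_nonneg : ∀ x, 0 ≤ f x)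
    (hf_bdd : ∃ M, ∀ x, f x ≤ M)
    (hf_prob : ∫ x, f x = 1)
    (X : ℕ → Ω → EuclideanSpace ℝ (Fin d))
    (hX_meas : ∀ i, Measurable (X i))
    (hX_indep : iIndepFun X ℙ)
    (hX_law : ∀ i, Measure.map (X i) ℙ =
      volume.withDensity fun x => ENNReal.ofReal (f x))
    (hsupp_cpt : IsCompact (tsupport f))
    (hsupp_pos : ∃ c > 0, ∀ x ∈ tsupport f, c ≤ f x)
    (hsupp_conv : Convex ℝ (tsupport f))
 :
    ∃ Dstar : ℝ, 0 < Dstar ∧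
      ∀ r : ℕ → ℝ, (∀ n, 0 < r n) → Tendsto r atTop (𝓝 0) →
        Tendsto (fun n : ℕ => (n : ℝ) * r n ^ d) atTop atTop →
        (∀ᶠ n : ℕ in atTop, Dstar * Real.log n ≤ (n : ℝ) * r n ^ d) →
        Tendsto (fun n : ℕ => ∫ ω,
            |(globalCritCount d k n (fun i : Fin n => X i.val ω) : ℝ) -
              (critCount d k n (r n) (fun i : Fin n => X i.val ω) : ℝ)|)
          atTop (𝓝 0) := by
  classical
  obtain ⟨c0, hc0pos, hc0⟩ := hsupp_pos
  obtain ⟨M, hM⟩ := hf_bdd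
  set K : Set (EuclideanSpace ℝ (Fin d)) := tsupport f with hKdef
  have hKmeas : MeasurableSet K := (isClosed_tsupport f).measurableSet
  have hf_int : Integrable f volume := by
    by_contra h
    rw [integral_undef h] at hf_prob
    norm_num at hf_prob
  have hMpos : 0 < M := by
    by_contra h
    push_neg at h
    have hz : ∀ x, f x = 0 := fun x => le_antisymm ((hM x).trans h) (hf_nonneg x)
    have hz2 : (∫ x, f x) = 0 := by simp [hz]
    rw [hz2] at hf_prob; norm_num at hf_prob
  have hKfin : volume K ≠ ⊤ := hsupp_cpt.measure_lt_top.ne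
  have hvol1 : 1 ≤ M * (volume K).toReal := by
    have hle : ∀ x, f x ≤ K.indicator (fun _ => M) x := by
      intro x
      by_cases hx : x ∈ K
      · simpa [Set.indicator_of_mem hx] using hM x
      · simp [Set.indicator_of_notMem hx, image_eq_zero_of_notMem_tsupport hx]
    have hind : Integrable (K.indicator fun _ => M) volume :=
      ((integrableOn_const_iff).mpr (Or.inr hsupp_cpt.measure_lt_top)).integrable_indicator hKmeas
    have hmono := integral_mono hf_int hind hle
    rwa [hf_prob, integral_indicator_const _ hKmeas, smul_eq_mul, mul_comm] at hmono
  have hvolK_pos : 0 < (volume K).toReal := by nlinarith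
  have hKne : K.Nonempty := by
    rcases Set.eq_empty_or_nonempty K with h | h
    · rw [h] at hvolK_pos; simp at hvolK_pos
    · exact h
  have hc0M : c0 ≤ M := by
    obtain ⟨x, hx⟩ := hKne
    exact (hc0 x hx).trans (hM x)
  obtain ⟨L0, hL0⟩ := hsupp_cpt.isBounded.subset_closedBall 0
  set L : ℝ := max L0 1 with hLdef
  have hL1 : (1:ℝ) ≤ L := le_max_right _ _
  have hKL : ∀ x ∈ K, ‖x‖ ≤ L := by
    intro x hx
    have h1 := hL0 hx
    rw [mem_closedBall, dist_zero_right] at h1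
    exact h1.trans (le_max_left _ _)
  set D : ℝ := Metric.diam K + 1 with hDdef
  have hD1 : (1:ℝ) ≤ D := by
    have := Metric.diam_nonneg (s := K); linarith
  have hD0 : (0:ℝ) < D := lt_of_lt_of_le one_pos hD1
  have hdiam : ∀ x ∈ K, ∀ y ∈ K, dist x y ≤ D - 1 := by
    intro x hx y hy
    have := Metric.dist_le_diam_of_mem hsupp_cpt.isBounded hx hy
    simp only [hDdef]; linarith
  set β : ℝ := c0 / (M * D ^ d) with hβdef
  have hβpos : 0 < β := div_pos hc0pos (by positivity)
  have hβne : β ≠ 0 := ne_of_gt hβpos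
  have hβ1 : β ≤ 1 := by
    rw [hβdef, div_le_one (by positivity)]
    have h1 : (1:ℝ) ≤ D ^ d := one_le_pow₀ hD1
    nlinarith
  set ν : Measure (EuclideanSpace ℝ (Fin d)) :=
    volume.withDensity fun x => ENNReal.ofReal (f x) with hνdef
  have hlaw : ∀ (i : ℕ) (A : Set (EuclideanSpace ℝ (Fin d))), MeasurableSet A →
      ℙ (X i ⁻¹' A) = ν A := by
    intro i A hA
    rw [← Measure.map_apply (hX_meas i) hA, hX_law i]
  have hν_ball : ∀ c ∈ K, ∀ ρ : ℝ, 0 < ρ → ρ ≤ D →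
      ENNReal.ofReal (β * ρ ^ d) ≤ ν (Metric.ball c ρ) := by
    intro c hc ρ hρ hρD
    have h1 : ν (Metric.ball c ρ) = ∫⁻ x in Metric.ball c ρ, ENNReal.ofReal (f x) := by
      rw [hνdef]; exact withDensity_apply _ measurableSet_ball
    have h2 : ∫⁻ x in Metric.ball c ρ ∩ K, ENNReal.ofReal c0
        ≤ ∫⁻ x in Metric.ball c ρ, ENNReal.ofReal (f x) := by
      refine le_trans (setLIntegral_mono hf_meas.ennreal_ofReal ?_)
        (lintegral_mono_set Set.inter_subset_left)
      exact fun x hx => ENNReal.ofReal_le_ofReal (hc0 x hx.2)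
    rw [setLIntegral_const] at h2
    have h3 := vol_ball_inter_conv hsupp_conv hdiam hc hρ hρD
    have h4 : ENNReal.ofReal (1 / M) ≤ volume K := by
      have h5 : 1 / M ≤ (volume K).toReal := by
        rw [div_le_iff₀ hMpos]; linarith
      calc ENNReal.ofReal (1/M) ≤ ENNReal.ofReal (volume K).toReal :=
            ENNReal.ofReal_le_ofReal h5
        _ = volume K := ENNReal.ofReal_toReal hKfin
    calc ENNReal.ofReal (β * ρ ^ d)
        = ENNReal.ofReal c0 * (ENNReal.ofReal ((ρ/D)^d) * ENNReal.ofReal (1/M)) := by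
          rw [← ENNReal.ofReal_mul (by positivity), ← ENNReal.ofReal_mul hc0pos.le]
          congr 1
          rw [hβdef, div_pow]; field_simp
      _ ≤ ENNReal.ofReal c0 * (ENNReal.ofReal ((ρ/D)^d) * volume K) :=
          mul_le_mul_right (mul_le_mul_right h4 _) _
      _ ≤ ENNReal.ofReal c0 * volume (Metric.ball c ρ ∩ K) := mul_le_mul_right h3 _
      _ ≤ ∫⁻ x in Metric.ball c ρ, ENNReal.ofReal (f x) := h2
      _ = ν (Metric.ball c ρ) := h1.symm
  refine ⟨((k:ℝ) + 4) * 4 ^ d / β, by positivity, ?_⟩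
  set Dstar : ℝ := ((k:ℝ) + 4) * 4 ^ d / β with hDstardef
  have hDstar1 : 1 ≤ Dstar := by
    rw [hDstardef, le_div_iff₀ hβpos, one_mul]
    have h4d : (1:ℝ) ≤ 4 ^ d := one_le_pow₀ (by norm_num)
    have hk0 : (0:ℝ) ≤ (k:ℝ) := Nat.cast_nonneg k
    nlinarith
  intro r hrpos hr0 hrinf hDev
  refine squeeze_zero' (g := fun n : ℕ => (4*L*(d:ℝ)+5)^d * ((n:ℝ)^2)⁻¹)
    (Filter.Eventually.of_forall fun n => integral_nonneg fun ω => abs_nonneg _) ?_ ?_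
  swap
  · have h1 : Filter.Tendsto (fun n : ℕ => ((n:ℝ)^2)⁻¹) Filter.atTop (𝓝 0) := by
      apply Filter.Tendsto.inv_tendsto_atTop
      exact (tendsto_pow_atTop two_ne_zero).comp tendsto_natCast_atTop_atTop
    simpa using h1.const_mul ((4*L*(d:ℝ)+5)^d)
  filter_upwards [hr0.eventually_lt_const one_pos, Filter.eventually_ge_atTop 3, hDev]
    with n hr1 hn3 hDn
  have hrn : 0 < r n := hrpos n
  have hn3' : (3:ℝ) ≤ (n:ℝ) := by exact_mod_cast hn3
  have hn0 : (0:ℝ) < n := by linarith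
  have hnne : (n:ℝ) ≠ 0 := ne_of_gt hn0
  have hlog1 : 1 ≤ Real.log n := by
    rw [Real.le_log_iff_exp_le hn0]
    calc Real.exp 1 ≤ 2.7182818286 := Real.exp_one_lt_d9.le
      _ ≤ 3 := by norm_num
      _ ≤ (n:ℝ) := hn3'
  have hd1 : (1:ℝ) ≤ (d:ℝ) := by exact_mod_cast hd
  have hd0 : (0:ℝ) < (d:ℝ) := by linarith
  have hdne : (d:ℝ) ≠ 0 := ne_of_gt hd0
  have hnrd1 : 1 ≤ (n:ℝ) * r n ^ d := by
    have h1 : (1:ℝ) ≤ Dstar * Real.log n := by nlinarith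
    linarith
  set δ : ℝ := r n / (2 * d) with hδdef
  have hδ0 : 0 < δ := by rw [hδdef]; positivity
  set Mz : ℕ := ⌈L / δ⌉₊ + 1 with hMzdef
  set grid0 : Finset (Fin d → ℤ) :=
    Fintype.piFinset fun _ => Finset.Icc (-(Mz:ℤ)) (Mz:ℤ) with hgrid0
  set pt : (Fin d → ℤ) → EuclideanSpace ℝ (Fin d) :=
    fun v => (WithLp.equiv 2 (Fin d → ℝ)).symm fun i => δ * (v i : ℝ) with hpt
  have hptv : ∀ w i, pt w i = δ * (w i : ℝ) := by
    intro w i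
    simp only [hpt]
    rfl
  set grid : Finset (Fin d → ℤ) :=
    grid0.filter (fun v => ∃ x ∈ K, dist (pt v) x ≤ r n / 4) with hgrid
  set Ev : (Fin d → ℤ) → Set Ω :=
    fun v => ⋂ i ∈ Finset.range n, X i ⁻¹' (Metric.ball (pt v) (r n / 2))ᶜ with hEv
  set Fbad : Set Ω := ⋃ i ∈ Finset.range n, X i ⁻¹' Kᶜ with hFbad
  set S : Set Ω := Fbad ∪ ⋃ v ∈ grid, Ev v with hS
  have hEvmeas : ∀ v, MeasurableSet (Ev v) := by
    intro v
    exact MeasurableSet.biInter (Set.to_countable _)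
      fun i _ => (hX_meas i) measurableSet_ball.compl
  have hSmeas : MeasurableSet S := by
    refine MeasurableSet.union ?_ ?_
    · exact MeasurableSet.biUnion (Set.to_countable _) fun i _ => (hX_meas i) hKmeas.compl
    · exact MeasurableSet.biUnion (Set.to_countable _) fun v _ => hEvmeas v
  -- pointwise bound
  have hpoint : ∀ ω, |(globalCritCount d k n (fun i : Fin n => X i.val ω) : ℝ) -
      (critCount d k n (r n) (fun i : Fin n => X i.val ω) : ℝ)|
      ≤ S.indicator (fun _ => (Nat.choose n (k+1) : ℝ)) ω := by
    intro ω
    set X' : Fin n → EuclideanSpace ℝ (Fin d) := fun i => X i.val ω with hX'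
    have hba' : critCount d k n (r n) X' ≤ globalCritCount d k n X' := by
      show ((Finset.powersetCard (k + 1) (Finset.univ : Finset (Fin n))).filter fun s =>
          gEpsCond (r n) (tupleOf X' k s) (Set.range X')).card ≤
        ((Finset.powersetCard (k + 1) (Finset.univ : Finset (Fin n))).filter fun s =>
          hCond (tupleOf X' k s) ∧ Set.range X' ∩
            Metric.ball (circC (tupleOf X' k s)) (circR (tupleOf X' k s)) = ∅).card
      apply Finset.card_le_card
      apply Finset.monotone_filter_right
      intro s _ hg
      exact ⟨hg.1.1, hg.2⟩
    have hsub0 : (0:ℝ) ≤ (globalCritCount d k n X' : ℝ) - (critCount d k n (r n) X' : ℝ) := by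
      have := (Nat.cast_le (α := ℝ)).2 hba'
      linarith
    rw [abs_of_nonneg hsub0]
    by_cases hωS : ω ∈ S
    · rw [Set.indicator_of_mem hωS]
      have h1 : globalCritCount d k n X' ≤ Nat.choose n (k+1) := by
        show ((Finset.powersetCard (k + 1) (Finset.univ : Finset (Fin n))).filter fun s =>
          hCond (tupleOf X' k s) ∧ Set.range X' ∩
            Metric.ball (circC (tupleOf X' k s)) (circR (tupleOf X' k s)) = ∅).card ≤ _
        calc _ ≤ (Finset.powersetCard (k+1) (Finset.univ : Finset (Fin n))).card :=
              Finset.card_filter_le _ _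
          _ = Nat.choose n (k+1) := by
              rw [Finset.card_powersetCard, Finset.card_univ, Fintype.card_fin]
      have h2 : (0:ℝ) ≤ (critCount d k n (r n) X' : ℝ) := Nat.cast_nonneg _
      have h3 : (globalCritCount d k n X' : ℝ) ≤ (Nat.choose n (k+1) : ℝ) := Nat.cast_le.2 h1
      linarith
    · rw [Set.indicator_of_notMem hωS]
      have hknF : ∀ i ∈ Finset.range n, X i ω ∈ K := by
        intro i hi
        by_contra hne
        exact hωS (Or.inl (Set.mem_biUnion hi hne))
      have hAB : globalCritCount d k n X' ≤ critCount d k n (r n) X' := by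
        show ((Finset.powersetCard (k + 1) (Finset.univ : Finset (Fin n))).filter fun s =>
          hCond (tupleOf X' k s) ∧ Set.range X' ∩
            Metric.ball (circC (tupleOf X' k s)) (circR (tupleOf X' k s)) = ∅).card ≤
          ((Finset.powersetCard (k + 1) (Finset.univ : Finset (Fin n))).filter fun s =>
          gEpsCond (r n) (tupleOf X' k s) (Set.range X')).card
        apply Finset.card_le_card
        intro s hsmem
        rw [Finset.mem_filter] at hsmem ⊢
        obtain ⟨hsP, hp1⟩ := hsmem
        refine ⟨hsP, ⟨⟨hp1.1, ?_⟩, hp1.2⟩⟩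
        by_contra hR
        push_neg at hR
        -- construct a grid point witnessing emptiness, contradiction with ω ∉ S
        set y := tupleOf X' k s with hy
        have hs : s.card = k + 1 := (Finset.mem_powersetCard.1 hsP).2
        have hyrange : ∀ j, y j ∈ Set.range X' := by
          intro j
          rw [hy]
          unfold tupleOf
          rw [dif_pos hs]
          exact Set.mem_range_self _
        have hX'K : ∀ j : Fin n, X' j ∈ K := fun j => hknF j.val (Finset.mem_range.2 j.isLt)
        have hyK : ∀ j, y j ∈ K := by
          intro j
          obtain ⟨i, hi⟩ := hyrange j
          rw [← hi]; exact hX'K i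
        have hCK : circC y ∈ K := by
          have h1 : circC y ∈ convexHull ℝ (Set.range y) :=
            intrinsicInterior_subset hp1.1.2
          exact convexHull_min (Set.range_subset_iff.2 hyK) hsupp_conv h1
        have hmiss : ∀ i ∈ Finset.range n, X i ω ∉ Metric.ball (circC y) (circR y) := by
          intro i hi hmem
          have hm2 : X i ω ∈ Set.range X' ∩ Metric.ball (circC y) (circR y) :=
            ⟨⟨⟨i, Finset.mem_range.1 hi⟩, rfl⟩, hmem⟩
          rw [hp1.2] at hm2
          exact hm2
        set v : Fin d → ℤ := fun i => round ((circC y) i / δ) with hv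
        have hterm : ∀ i : Fin d, |δ * ((v i):ℝ) - (circC y) i| ≤ δ / 2 := by
          intro i
          calc |δ * ((v i):ℝ) - (circC y) i| = |δ * ((circC y) i / δ - ((v i):ℝ))| := by
                rw [abs_sub_comm]
                congr 1
                rw [mul_sub, mul_div_cancel₀ _ (ne_of_gt hδ0)]
            _ = δ * |(circC y) i / δ - ((v i):ℝ)| := by rw [abs_mul, abs_of_pos hδ0]
            _ ≤ δ * (1/2) := mul_le_mul_of_nonneg_left (abs_sub_round _) hδ0.le
            _ = δ / 2 := by ring
        have hdistv : dist (pt v) (circC y) ≤ r n / 4 := by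
          rw [EuclideanSpace.dist_eq]
          have hsum : ∑ i, dist (pt v i) ((circC y) i) ^ 2 ≤ (r n / 4)^2 := by
            have hstep : ∀ i : Fin d, dist (pt v i) ((circC y) i) ^ 2 ≤ (δ/2)^2 := by
              intro i
              rw [Real.dist_eq, hptv v i]
              have h1 := hterm i
              have h2 : (0:ℝ) ≤ |δ * ((v i):ℝ) - (circC y) i| := abs_nonneg _
              nlinarith
            calc ∑ i, dist (pt v i) ((circC y) i) ^ 2 ≤ ∑ _i : Fin d, (δ/2)^2 :=
                  Finset.sum_le_sum fun i _ => hstep i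
              _ = (d:ℝ) * (δ/2)^2 := by
                  rw [Finset.sum_const, Finset.card_univ, Fintype.card_fin, nsmul_eq_mul]
              _ ≤ (r n / 4)^2 := by
                  rw [hδdef]
                  have h1 : (d:ℝ) * (r n / (2*(d:ℝ)) / 2)^2 = r n^2 / (16*(d:ℝ)) := by
                    field_simp; ring
                  rw [h1, div_pow]
                  rw [div_le_div_iff₀ (by positivity) (by positivity)]
                  nlinarith [sq_nonneg (r n)]
          calc Real.sqrt (∑ i, dist (pt v i) ((circC y) i) ^ 2)
              ≤ Real.sqrt ((r n / 4)^2) := Real.sqrt_le_sqrt hsum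
            _ = r n / 4 := Real.sqrt_sq (by positivity)
        have hvgrid : v ∈ grid := by
          rw [hgrid, Finset.mem_filter]
          constructor
          · rw [hgrid0, Fintype.mem_piFinset]
            intro i
            rw [Finset.mem_Icc, ← abs_le]
            have h1 : |((v i : ℤ) : ℝ)| ≤ (Mz : ℝ) := by
              have habs : |((v i):ℝ)| ≤ |(circC y) i / δ| + 1/2 := by
                have h0 : ((v i):ℝ) = (circC y) i/δ - ((circC y) i/δ - ((v i):ℝ)) := by ring
                rw [h0]
                calc |(circC y) i/δ - ((circC y) i/δ - ((v i):ℝ))|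
                    ≤ |(circC y) i/δ| + |(circC y) i/δ - ((v i):ℝ)| := abs_sub _ _
                  _ ≤ |(circC y) i/δ| + 1/2 := by
                      have := abs_sub_round ((circC y) i / δ)
                      linarith
              have h3 : |(circC y) i / δ| ≤ L / δ := by
                rw [abs_div, abs_of_pos hδ0]
                have h4 : |(circC y) i| ≤ L := (abs_coord_le_norm' _ i).trans (hKL _ hCK)
                gcongr
              have h4 : L / δ ≤ (⌈L/δ⌉₊ : ℝ) := Nat.le_ceil _
              have h5 : ((Mz:ℕ):ℝ) = (⌈L/δ⌉₊:ℝ) + 1 := by rw [hMzdef]; push_cast; ring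
              linarith
            exact_mod_cast h1
          · exact ⟨circC y, hCK, hdistv⟩
        have hωE : ω ∈ Ev v := by
          rw [hEv]
          refine Set.mem_biInter fun i hi => ?_
          simp only [Set.mem_preimage, Set.mem_compl_iff, Metric.mem_ball]
          intro hmem
          refine hmiss i hi (Metric.mem_ball.2 ?_)
          calc dist (X i ω) (circC y)
              ≤ dist (X i ω) (pt v) + dist (pt v) (circC y) := dist_triangle _ _ _
            _ < r n / 2 + r n / 4 := by linarith
            _ < circR y := by linarith
        exact hωS (Or.inr (Set.mem_biUnion hvgrid hωE))
      have heq : globalCritCount d k n X' = critCount d k n (r n) X' :=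
        le_antisymm hAB hba'
      rw [heq, sub_self]
  -- integral bound
  have hint : Integrable (S.indicator fun _ => ((Nat.choose n (k+1) : ℕ) : ℝ)) ℙ :=
    (integrable_const _).indicator hSmeas
  have hmono := integral_mono_of_nonneg
    (Filter.Eventually.of_forall fun ω => abs_nonneg _) hint
    (Filter.Eventually.of_forall hpoint)
  rw [integral_indicator_const _ hSmeas, smul_eq_mul] at hmono
  -- probability bound for each grid cell
  have hPEv : ∀ v ∈ grid, ℙ (Ev v) ≤ ENNReal.ofReal (Real.exp (-(β * (r n/4)^d)) ^ n) := by
    intro v hv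
    obtain ⟨x0, hx0K, hx0d⟩ := (Finset.mem_filter.1 hv).2
    have hsub : Metric.ball x0 (r n / 4) ⊆ Metric.ball (pt v) (r n / 2) := by
      intro z hz
      rw [Metric.mem_ball] at hz ⊢
      have h1 : dist (pt v) x0 ≤ r n / 4 := hx0d
      calc dist z (pt v) ≤ dist z x0 + dist x0 (pt v) := dist_triangle _ _ _
        _ < r n/4 + r n/4 := by rw [dist_comm x0 (pt v)]; linarith
        _ = r n/2 := by ring
    have hballν : ENNReal.ofReal (β * (r n/4)^d) ≤ ν (Metric.ball (pt v) (r n/2)) := by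
      refine le_trans (hν_ball x0 hx0K (r n/4) (by positivity) (by linarith)) ?_
      exact measure_mono hsub
    have hprod : ℙ (Ev v) = ∏ i ∈ Finset.range n, ℙ (X i ⁻¹' (Metric.ball (pt v) (r n/2))ᶜ) := by
      rw [hEv]
      exact hX_indep.measure_inter_preimage_eq_mul (Finset.range n)
        (sets := fun _ => (Metric.ball (pt v) (r n/2))ᶜ)
        (fun i _ => measurableSet_ball.compl)
    rw [hprod]
    have hfac : ∀ i ∈ Finset.range n, ℙ (X i ⁻¹' (Metric.ball (pt v) (r n/2))ᶜ)
        ≤ ENNReal.ofReal (Real.exp (-(β * (r n/4)^d))) := by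
      intro i _
      rw [Set.preimage_compl,
        measure_compl ((hX_meas i) measurableSet_ball) (measure_ne_top _ _), measure_univ,
        hlaw i _ measurableSet_ball]
      have hp1 : β * (r n/4)^d ≤ 1 := by
        have h6 : (r n/4)^d ≤ 1 := pow_le_one₀ (by positivity) (by linarith)
        nlinarith
      calc (1:ℝ≥0∞) - ν (Metric.ball (pt v) (r n/2))
          ≤ 1 - ENNReal.ofReal (β * (r n/4)^d) := tsub_le_tsub_left hballν 1
        _ = ENNReal.ofReal (1 - β * (r n/4)^d) := by
            rw [ENNReal.ofReal_sub _ (by positivity : (0:ℝ) ≤ β * (r n/4)^d),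
              ENNReal.ofReal_one]
        _ ≤ ENNReal.ofReal (Real.exp (-(β * (r n/4)^d))) := by
            apply ENNReal.ofReal_le_ofReal
            have := Real.add_one_le_exp (-(β * (r n/4)^d))
            linarith
    calc ∏ i ∈ Finset.range n, ℙ (X i ⁻¹' (Metric.ball (pt v) (r n/2))ᶜ)
        ≤ ∏ _i ∈ Finset.range n, ENNReal.ofReal (Real.exp (-(β * (r n/4)^d))) :=
          Finset.prod_le_prod' hfac
      _ = ENNReal.ofReal (Real.exp (-(β * (r n/4)^d))) ^ n := by
          rw [Finset.prod_const, Finset.card_range]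
      _ = ENNReal.ofReal (Real.exp (-(β * (r n/4)^d)) ^ n) := by
          rw [ENNReal.ofReal_pow (Real.exp_pos _).le]
  have hPF : ℙ Fbad = 0 := by
    have hνKc : ν Kᶜ = 0 := by
      rw [hνdef, withDensity_apply _ hKmeas.compl]
      have h0 : ∀ x ∈ Kᶜ, ENNReal.ofReal (f x) = 0 := by
        intro x hx
        rw [image_eq_zero_of_notMem_tsupport hx, ENNReal.ofReal_zero]
      calc ∫⁻ x in Kᶜ, ENNReal.ofReal (f x)
          = ∫⁻ _x in Kᶜ, 0 :=
            setLIntegral_congr_fun hKmeas.compl h0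
        _ = 0 := by simp
    rw [hFbad]
    refine (measure_biUnion_null_iff (Set.to_countable _)).2 fun i _ => ?_
    rw [hlaw i _ hKmeas.compl]
    exact hνKc
  have hPS : (ℙ S).toReal ≤ (grid.card : ℝ) * Real.exp (-(β * (r n/4)^d)) ^ n := by
    have h1 : ℙ S ≤ (grid.card : ℝ≥0∞) * ENNReal.ofReal (Real.exp (-(β * (r n/4)^d)) ^ n) := by
      calc ℙ S ≤ ℙ Fbad + ℙ (⋃ v ∈ (grid : Finset (Fin d → ℤ)), Ev v) := measure_union_le _ _
        _ = ℙ (⋃ v ∈ (grid : Finset (Fin d → ℤ)), Ev v) := by rw [hPF, zero_add]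
        _ ≤ ∑ v ∈ grid, ℙ (Ev v) := measure_biUnion_finset_le _ _
        _ ≤ ∑ _v ∈ grid, ENNReal.ofReal (Real.exp (-(β * (r n/4)^d)) ^ n) :=
            Finset.sum_le_sum hPEv
        _ = grid.card * ENNReal.ofReal (Real.exp (-(β * (r n/4)^d)) ^ n) := by
            rw [Finset.sum_const, nsmul_eq_mul]
    calc (ℙ S).toReal
        ≤ ((grid.card : ℝ≥0∞) * ENNReal.ofReal (Real.exp (-(β * (r n/4)^d)) ^ n)).toReal :=
          ENNReal.toReal_mono
            (ENNReal.mul_ne_top (ENNReal.natCast_ne_top _) ENNReal.ofReal_ne_top) h1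
      _ = (grid.card : ℝ) * Real.exp (-(β * (r n/4)^d)) ^ n := by
          rw [ENNReal.toReal_mul, ENNReal.toReal_natCast _,
            ENNReal.toReal_ofReal (by positivity)]
  -- grid cardinality bound
  have hgridcard : (grid.card : ℝ) ≤ (4*L*(d:ℝ)+5)^d * n := by
    have h1 : grid.card ≤ grid0.card := Finset.card_le_card (Finset.filter_subset _ _)
    have h2 : grid0.card = (2*Mz+1)^d := by
      rw [hgrid0, Fintype.card_piFinset]
      rw [Finset.prod_const, Finset.card_univ, Fintype.card_fin]
      congr 1
      rw [Int.card_Icc]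
      omega
    have h3 : ((2*Mz+1 : ℕ):ℝ) ≤ (4*L*(d:ℝ)+5) / r n := by
      push_cast
      have h4 : (⌈L/δ⌉₊ : ℝ) < L/δ + 1 := Nat.ceil_lt_add_one (by positivity)
      have h5 : L / δ = 2*L*(d:ℝ) / r n := by
        rw [hδdef]; field_simp
      have h7 : (5:ℝ) ≤ 5 / r n := by
        rw [le_div_iff₀ hrn]; nlinarith
      have h9 : 2*(2*L*(d:ℝ)/r n) = 4*L*(d:ℝ)/r n := by ring
      have h10 : (4*L*(d:ℝ)+5)/r n = 4*L*(d:ℝ)/r n + 5/r n := add_div _ _ _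
      have h11 : ((Mz:ℕ):ℝ) = (⌈L/δ⌉₊:ℝ) + 1 := by rw [hMzdef]; push_cast; ring
      linarith [h4, h5, h7, h9, h10]
    have h10 : ((grid0.card:ℕ):ℝ) ≤ ((4*L*(d:ℝ)+5)/ r n)^d := by
      rw [h2]
      push_cast
      push_cast at h3
      exact pow_le_pow_left₀ (by positivity) h3 d
    have h12 : (4*L*(d:ℝ)+5)^d / r n ^ d ≤ (4*L*(d:ℝ)+5)^d * n := by
      rw [div_le_iff₀ (by positivity)]
      calc (4*L*(d:ℝ)+5)^d = (4*L*(d:ℝ)+5)^d * 1 := (mul_one _).symm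
        _ ≤ (4*L*(d:ℝ)+5)^d * ((n:ℝ) * r n ^ d) := by
            apply mul_le_mul_of_nonneg_left hnrd1 (by positivity)
        _ = (4*L*(d:ℝ)+5)^d * n * r n ^ d := by ring
    calc (grid.card : ℝ) ≤ (grid0.card : ℝ) := by exact_mod_cast h1
      _ ≤ ((4*L*(d:ℝ)+5)/ r n)^d := h10
      _ = (4*L*(d:ℝ)+5)^d / r n ^ d := div_pow _ _ _
      _ ≤ (4*L*(d:ℝ)+5)^d * n := h12
  -- exponential bound
  have hexp : Real.exp (-(β * (r n/4)^d)) ^ n ≤ ((n:ℝ)^(k+4))⁻¹ := by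
    rw [← Real.exp_nat_mul]
    have h1 : ((k:ℝ)+4) * Real.log n ≤ β * (r n/4)^d * n := by
      have h2 : (r n/4)^d = r n^d / 4^d := div_pow _ _ _
      have h4 : (β / 4^d) * (Dstar * Real.log n) ≤ (β/4^d) * ((n:ℝ) * r n ^ d) :=
        mul_le_mul_of_nonneg_left hDn (by positivity)
      have h5 : (β / 4^d) * Dstar = (k:ℝ) + 4 := by
        rw [hDstardef]; field_simp
      calc ((k:ℝ)+4) * Real.log n = (β/4^d) * Dstar * Real.log n := by rw [h5]
        _ = (β/4^d) * (Dstar * Real.log n) := by ring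
        _ ≤ (β/4^d) * ((n:ℝ) * r n ^ d) := h4
        _ = β * (r n/4)^d * n := by rw [h2]; ring
    have h6 : (n:ℝ) * -(β * (r n/4)^d) ≤ -(((k:ℝ)+4) * Real.log n) := by
      have h7 := neg_le_neg h1
      calc (n:ℝ) * -(β * (r n/4)^d) = -(β * (r n/4)^d * n) := by ring
        _ ≤ -(((k:ℝ)+4) * Real.log n) := h7
    calc Real.exp ((n:ℝ) * -(β * (r n/4)^d))
        ≤ Real.exp (-(((k:ℝ)+4) * Real.log n)) := Real.exp_le_exp.2 h6
      _ = ((n:ℝ)^(k+4))⁻¹ := by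
          rw [Real.exp_neg]
          congr 1
          rw [show ((k:ℝ)+4) = ((k+4 : ℕ):ℝ) by push_cast; ring]
          rw [Real.exp_nat_mul, Real.exp_log hn0]
  -- final assembly
  have hchoose : ((Nat.choose n (k+1) : ℕ):ℝ) ≤ (n:ℝ)^(k+1) := by
    have := Nat.choose_le_pow n (k+1)
    exact_mod_cast this
  have hfinal : (ℙ S).toReal * ((Nat.choose n (k+1) : ℕ) : ℝ)
      ≤ (4*L*(d:ℝ)+5)^d * ((n:ℝ)^2)⁻¹ := by
    calc (ℙ S).toReal * ((Nat.choose n (k+1):ℕ):ℝ)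
        ≤ ((4*L*(d:ℝ)+5)^d * n * ((n:ℝ)^(k+4))⁻¹) * (n:ℝ)^(k+1) := by
          apply mul_le_mul ?_ hchoose (Nat.cast_nonneg _) (by positivity)
          calc (ℙ S).toReal ≤ (grid.card:ℝ) * Real.exp (-(β * (r n/4)^d)) ^ n := hPS
            _ ≤ ((4*L*(d:ℝ)+5)^d * n) * ((n:ℝ)^(k+4))⁻¹ := by
                apply mul_le_mul hgridcard hexp (by positivity) (by positivity)
      _ = (4*L*(d:ℝ)+5)^d * ((n:ℝ)^2)⁻¹ := by
          field_simp
          ring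
  exact le_trans hmono hfinal
end
end

section
/- Let d ≥ 1 and k ≥ 1 be integers, let f : ℝ^d → [0,∞) be a measurable probability density with f ≤ f_max everywhere, and let X_1, …, X_k be i.i.d. random points in ℝ^d with density f. Then for every r > 0, the probability that there exists a Euclidean ball of radius r containing all of X_1, …, X_k is at most (f_max · ω_d · 2^d)^{k−1} · r^{d(k−1)}, where ω_d is the Lebesgue volume of the unit ball in ℝ^d. -/
open MeasureTheory ProbabilityTheory Filter Finset Metric
open scoped ENNReal NNReal Topology Classical

noncomputable section

/-- Lemma 5.1: for `X_1, …, X_k` i.i.d. with density `f ≤ f_max`, the probability that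
all of them lie in some ball of radius `r` is at most
`(f_max ω_d 2^d)^{k-1} r^{d(k-1)}`. -/
theorem points_in_ball
    (d k : ℕ) (hd : 1 ≤ d) (hk : 1 ≤ k)
    (Ω : Type*) [MeasureSpace Ω] [IsProbabilityMeasure (ℙ : Measure Ω)]
    (f : EuclideanSpace ℝ (Fin d) → ℝ)
    (hf_meas : Measurable f) (hf_nonneg : ∀ x, 0 ≤ f x)
    (hf_prob : ∫ x, f x = 1)
    (fmax : ℝ) (hfmax : ∀ x, f x ≤ fmax)
    (X : Fin k → Ω → EuclideanSpace ℝ (Fin d))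
    (hX_meas : ∀ i, Measurable (X i))
    (hX_indep : iIndepFun X ℙ)
    (hX_law : ∀ i, Measure.map (X i) ℙ =
      volume.withDensity fun x => ENNReal.ofReal (f x))
    (r : ℝ) (hr : 0 < r) :
    ℙ {ω | ∃ c : EuclideanSpace ℝ (Fin d), ∀ i : Fin k, X i ω ∈ Metric.closedBall c r} ≤
      ENNReal.ofReal ((fmax * unitBallVol d * 2 ^ d) ^ (k - 1) * r ^ (d * (k - 1))) := by
  obtain ⟨m, rfl⟩ : ∃ m, k = m + 1 := ⟨k - 1, (Nat.succ_pred_eq_of_pos hk).symm⟩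
  have hfmax0 : 0 ≤ fmax := (hf_nonneg 0).trans (hfmax 0)
  set μ : Measure (EuclideanSpace ℝ (Fin d)) := volume.withDensity fun x => ENNReal.ofReal (f x) with hμdef
  have hμprob : IsProbabilityMeasure μ := by
    rw [← hX_law 0]
    exact Measure.isProbabilityMeasure_map (hX_meas 0).aemeasurable
  set g : Ω → (Fin (m + 1) → (EuclideanSpace ℝ (Fin d))) := fun ω i => X i ω with hg
  have hg_meas : Measurable g := measurable_pi_lambda _ fun i => hX_meas i
  have hjoint : Measure.map g ℙ = Measure.pi (fun _ : Fin (m + 1) => μ) := by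
    refine (Measure.pi_eq fun s hs => ?_).symm
    rw [Measure.map_apply hg_meas (MeasurableSet.univ_pi hs)]
    have hpre : g ⁻¹' Set.pi Set.univ s = ⋂ i ∈ Finset.univ, X i ⁻¹' s i := by
      ext ω; simp [g, Set.mem_pi]
    rw [hpre, hX_indep.measure_inter_preimage_eq_mul Finset.univ (fun i _ => hs i)]
    refine Finset.prod_congr rfl fun i _ => ?_
    rw [← Measure.map_apply (hX_meas i) (hs i), hX_law i]
  set S : Set (Fin (m + 1) → (EuclideanSpace ℝ (Fin d))) := {y | ∀ i, dist (y i) (y 0) ≤ 2 * r} with hS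
  have hS_meas : MeasurableSet S := by
    have : S = ⋂ i, {y : Fin (m + 1) → (EuclideanSpace ℝ (Fin d)) | dist (y i) (y 0) ≤ 2 * r} := by
      ext y; simp [hS]
    rw [this]
    exact MeasurableSet.iInter fun i =>
      measurableSet_le ((measurable_pi_apply i).dist (measurable_pi_apply 0)) measurable_const
  have hsub : {ω | ∃ c : (EuclideanSpace ℝ (Fin d)), ∀ i : Fin (m + 1), X i ω ∈ Metric.closedBall c r} ⊆ g ⁻¹' S := by
    rintro ω ⟨c, hc⟩ i
    have h0 := hc 0
    have hi := hc i
    simp only [Metric.mem_closedBall] at h0 hi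
    calc dist (X i ω) (X 0 ω) ≤ dist (X i ω) c + dist c (X 0 ω) := dist_triangle _ _ _
      _ ≤ r + r := add_le_add hi ((dist_comm c (X 0 ω)) ▸ h0)
      _ = 2 * r := by ring
  refine (measure_mono hsub).trans ?_
  rw [← Measure.map_apply hg_meas hS_meas, hjoint]
  -- split off coordinate 0
  set ν : Measure (Fin m → (EuclideanSpace ℝ (Fin d))) := Measure.pi fun _ => μ with hν
  have hmp := (measurePreserving_piFinSuccAbove (fun _ : Fin (m + 1) => μ) 0).symm
  rw [← hmp.measure_preimage hS_meas.nullMeasurableSet]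
  set T : Set ((EuclideanSpace ℝ (Fin d)) × (Fin m → (EuclideanSpace ℝ (Fin d)))) := {p | ∀ j, dist (p.2 j) p.1 ≤ 2 * r} with hT
  have hT_meas : MeasurableSet T := by
    have : T = ⋂ j, {p : (EuclideanSpace ℝ (Fin d)) × (Fin m → (EuclideanSpace ℝ (Fin d))) | dist (p.2 j) p.1 ≤ 2 * r} := by
      ext p; simp [hT]
    rw [this]
    exact MeasurableSet.iInter fun j =>
      measurableSet_le (((measurable_pi_apply j).comp measurable_snd).dist measurable_fst)
        measurable_const
  have hTsub : (MeasurableEquiv.piFinSuccAbove (fun _ : Fin (m + 1) => (EuclideanSpace ℝ (Fin d))) 0).symm ⁻¹' S ⊆ T := by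
    rintro ⟨x, y⟩ hp j
    have h1 := hp ((0 : Fin (m + 1)).succAbove j)
    simpa [MeasurableEquiv.piFinSuccAbove, Fin.insertNth_apply_succAbove,
      Fin.insertNth_apply_same] using h1
  refine (measure_mono hTsub).trans ?_
  rw [Measure.prod_apply hT_meas]
  -- bound on the measure of a ball
  set a : ℝ := fmax * unitBallVol d * 2 ^ d * r ^ d with ha
  have hω : (0:ℝ) ≤ unitBallVol d := ENNReal.toReal_nonneg
  have ha0 : 0 ≤ a :=
    mul_nonneg (mul_nonneg (mul_nonneg hfmax0 hω) (by positivity)) (by positivity)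
  have hball : ∀ x : (EuclideanSpace ℝ (Fin d)), μ (Metric.closedBall x (2 * r)) ≤ ENNReal.ofReal a := by
    intro x
    have h1 : μ (Metric.closedBall x (2 * r)) =
        ∫⁻ y in Metric.closedBall x (2 * r), ENNReal.ofReal (f y) ∂volume := by
      rw [hμdef, withDensity_apply _ measurableSet_closedBall]
    have h2 : (∫⁻ y in Metric.closedBall x (2 * r), ENNReal.ofReal (f y) ∂volume) ≤
        ∫⁻ _ in Metric.closedBall x (2 * r), ENNReal.ofReal fmax ∂volume :=
      setLIntegral_mono measurable_const fun y _ => ENNReal.ofReal_le_ofReal (hfmax y)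
    rw [h1]
    refine h2.trans ?_
    rw [setLIntegral_const]
    have h2r : (0 : ℝ) ≤ 2 * r := by positivity
    rw [MeasureTheory.Measure.addHaar_closedBall _ x h2r, finrank_euclideanSpace_fin]
    have hvol : (volume (Metric.ball (0 : (EuclideanSpace ℝ (Fin d))) 1)) = ENNReal.ofReal (unitBallVol d) :=
      (ENNReal.ofReal_toReal measure_ball_lt_top.ne).symm
    rw [hvol, ← ENNReal.ofReal_mul (by positivity : (0:ℝ) ≤ (2 * r) ^ d),
      ← ENNReal.ofReal_mul hfmax0]
    refine le_of_eq (congrArg ENNReal.ofReal ?_)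
    rw [ha, mul_pow]
    ring
  have hslice : ∀ x : (EuclideanSpace ℝ (Fin d)), ν (Prod.mk x ⁻¹' T) ≤ ENNReal.ofReal a ^ m := by
    intro x
    have hTx : Prod.mk x ⁻¹' T = Set.pi Set.univ fun _ : Fin m => Metric.closedBall x (2 * r) := by
      ext y
      simp [hT, Set.mem_pi, Metric.mem_closedBall]
    rw [hTx, hν, Measure.pi_pi]
    calc ∏ _j : Fin m, μ (Metric.closedBall x (2 * r))
        ≤ ∏ _j : Fin m, ENNReal.ofReal a := Finset.prod_le_prod' fun j _ => hball x
      _ = ENNReal.ofReal a ^ m := by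
          rw [Finset.prod_const, Finset.card_univ, Fintype.card_fin]
  calc (∫⁻ x, ν (Prod.mk x ⁻¹' T) ∂μ) ≤ ∫⁻ _, ENNReal.ofReal a ^ m ∂μ :=
        lintegral_mono fun x => hslice x
    _ = ENNReal.ofReal a ^ m := by rw [lintegral_const, measure_univ, mul_one]
    _ = ENNReal.ofReal
        ((fmax * unitBallVol d * 2 ^ d) ^ (m + 1 - 1) * r ^ (d * (m + 1 - 1))) := by
          rw [← ENNReal.ofReal_pow ha0]
          congr 1
          simp only [Nat.add_sub_cancel, ha]
          rw [mul_pow, pow_mul]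
end
end
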